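/- For sections X₁, X₂, X₃ of a regular distribution D, the intrinsic curvature endomorphism satisfies R^D(X₁,X₂)X₃ = π^D(R(X₁,X₂)X₃) − (π^D ∘ ∇_{X₁})(B(X₂,X₃)) + (π^D ∘ ∇_{X₂})(B(X₁,X₃)) + π^D(∇_{π^{D⊥}([X₁,X₂])} X₃), where R is the Riemann curvature endomorphism of (M,g) and R^D is defined with ∇^D and the projected bracket [·,·]^D = π^D([·,·]). -/
import Mathlib


/-- Abstract algebraic model of the `C^∞(M)`-module of vector fields on a
Riemannian manifold `(M,g)`: metric `g`, Lie bracket, Levi-Civita connection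
`nabla` and the action `act X f = X(f)` of vector fields on functions. -/
structure RiemGeom (C V : Type*) [CommRing C] [AddCommGroup V] [Module C V] where
  g : V →ₗ[C] V →ₗ[C] C
  g_symm : ∀ X Y, g X Y = g Y X
  g_nondeg : ∀ X, (∀ Y, g X Y = 0) → X = 0
  bracket : V → V → V
  nabla : V → V → V
  act : V → C → C
  act_add : ∀ X f₁ f₂, act X (f₁ + f₂) = act X f₁ + act X f₂
  act_mul : ∀ X f₁ f₂, act X (f₁ * f₂) = f₁ * act X f₂ + f₂ * act X f₁
  act_add_left : ∀ X Y f, act (X + Y) f = act X f + act Y f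
  act_smul_left : ∀ (f h : C) X, act (f • X) h = f * act X h
  nabla_add_left : ∀ X X' Y, nabla (X + X') Y = nabla X Y + nabla X' Y
  nabla_smul_left : ∀ (f : C) X Y, nabla (f • X) Y = f • nabla X Y
  nabla_add_right : ∀ X Y Y', nabla X (Y + Y') = nabla X Y + nabla X Y'
  nabla_leibniz : ∀ X (f : C) Y, nabla X (f • Y) = act X f • Y + f • nabla X Y
  torsion_free : ∀ X Y, nabla X Y - nabla Y X = bracket X Y
  metric_compat : ∀ X Y Z, act X (g Y Z) = g (nabla X Y) Z + g Y (nabla X Z)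

/-- A regular distribution `D` in a Riemannian manifold, together with its
orthogonal complement `Dperp` and the orthogonal projection `piD` onto `D`. -/
structure RiemDist {C V : Type*} [CommRing C] [AddCommGroup V] [Module C V]
    (G : RiemGeom C V) where
  D : Submodule C V
  Dperp : Submodule C V
  piD : V →ₗ[C] V
  piD_mem : ∀ v, piD v ∈ D
  piD_id : ∀ v ∈ D, piD v = v
  perp_mem : ∀ v, v - piD v ∈ Dperp
  piD_perp : ∀ w ∈ Dperp, piD w = 0
  orth : ∀ v ∈ D, ∀ w ∈ Dperp, G.g v w = 0

variable {C V : Type*} [CommRing C] [AddCommGroup V] [Module C V]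

/-- The intrinsic connection `∇^D_X Y = π^D (∇_X Y)`. -/
def nablaD (G : RiemGeom C V) (P : RiemDist G) (X Y : V) : V := P.piD (G.nabla X Y)

/-- The second fundamental form `B(X,Y) = ∇_X Y - ∇^D_X Y = π^{D⊥}(∇_X Y)`. -/
def sff (G : RiemGeom C V) (P : RiemDist G) (X Y : V) : V :=
  G.nabla X Y - P.piD (G.nabla X Y)

/-- The Lie derivative of the metric: `(L_Z g)(X,Y)`. -/
def lieMetric (G : RiemGeom C V) (Z X Y : V) : C :=
  G.act Z (G.g X Y) - G.g (G.bracket Z X) Y - G.g X (G.bracket Z Y)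

/-- The exterior derivative of the one-form `i_Z g`: `(d (i_Z g))(X,Y)`. -/
def dIZg (G : RiemGeom C V) (Z X Y : V) : C :=
  G.act X (G.g Z Y) - G.act Y (G.g Z X) - G.g Z (G.bracket X Y)

/-- The curvature endomorphism `R(X,Y)Z` of the Levi-Civita connection. -/
def curvR (G : RiemGeom C V) (X Y Z : V) : V :=
  G.nabla X (G.nabla Y Z) - G.nabla Y (G.nabla X Z) - G.nabla (G.bracket X Y) Z

/-- The curvature endomorphism `R^D(X,Y)Z` of the intrinsic connection, taken
with respect to the projected bracket `[X,Y]^D = π^D [X,Y]`. -/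
def curvRD (G : RiemGeom C V) (P : RiemDist G) (X Y Z : V) : V :=
  nablaD G P X (nablaD G P Y Z) - nablaD G P Y (nablaD G P X Z) -
    nablaD G P (P.piD (G.bracket X Y)) Z

/-- for sections `X₁, X₂, X₃` of `D`,
`R^D(X₁,X₂)X₃ = π^D(R(X₁,X₂)X₃) − (π^D∘∇_{X₁})(B(X₂,X₃)) + (π^D∘∇_{X₂})(B(X₁,X₃))
  + π^D(∇_{π^{D⊥}([X₁,X₂])} X₃)`. -/
theorem intrinsic_curvature_endomorphism
    {C V : Type*} [CommRing C] [AddCommGroup V] [Module C V]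
    (G : RiemGeom C V) (P : RiemDist G) :
    ∀ X₁ ∈ P.D, ∀ X₂ ∈ P.D, ∀ X₃ ∈ P.D,
      curvRD G P X₁ X₂ X₃ =
        P.piD (curvR G X₁ X₂ X₃)
          - P.piD (G.nabla X₁ (sff G P X₂ X₃))
          + P.piD (G.nabla X₂ (sff G P X₁ X₃))
          + P.piD (G.nabla (G.bracket X₁ X₂ - P.piD (G.bracket X₁ X₂)) X₃) := by
  intro X₁ _ X₂ _ X₃ _
  have h1 : ∀ a b Y : V, G.nabla (a - b) Y = G.nabla a Y - G.nabla b Y := by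
    intro a b Y
    rw [eq_sub_iff_add_eq, ← G.nabla_add_left, sub_add_cancel]
  have h2 : ∀ (X a b : V), G.nabla X (a - b) = G.nabla X a - G.nabla X b := by
    intro X a b
    rw [eq_sub_iff_add_eq, ← G.nabla_add_right, sub_add_cancel]
  simp only [curvRD, curvR, nablaD, sff, h1, h2, map_sub, map_add]
  abel
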